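/- Abstract mean-dispersion principle: let {e_ℓ} be an orthonormal basis of a Hilbert space H and λ_ℓ = 2ℓ+1. If {f_k}_{k=0}^n is an orthonormal family in H, then Σ_{k=0}^n Σ_ℓ λ_ℓ |⟨f_k, e_ℓ⟩|² ≥ (n+1)². -/

import Mathlib

open scoped ENNReal

lemma aux_sum_odd (N : ℕ) :
    ∑ ℓ ∈ Finset.range N, (2*(ℓ:ℝ≥0∞)+1) = (N:ℝ≥0∞)^2 := by
  induction N with
  | zero => simp
  | succ m ih =>
    rw [Finset.sum_range_succ, ih]
    push_cast
    ring

lemma aux_key (a : ℕ → ℝ≥0∞) (N : ℕ) (ha : ∀ ℓ, a ℓ ≤ 1)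
    (hsum : (N : ℝ≥0∞) ≤ ∑' ℓ, a ℓ) :
    (N:ℝ≥0∞)^2 ≤ ∑' ℓ : ℕ, (2*(ℓ:ℝ≥0∞)+1) * a ℓ := by
  set lam : ℕ → ℝ≥0∞ := fun ℓ => 2*(ℓ:ℝ≥0∞)+1 with hlam
  have hmono : Monotone lam := by
    intro i j hij
    simp only [hlam]
    gcongr
  set s : Set ℕ := ↑(Finset.range N) with hs
  have hsplit : ∀ g : ℕ → ℝ≥0∞,
      ∑' ℓ, g ℓ = ∑ ℓ ∈ Finset.range N, g ℓ + ∑' ℓ : ↥sᶜ, g ℓ := by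
    intro g
    rw [← Summable.tsum_add_tsum_compl (s := s) ENNReal.summable ENNReal.summable,
      Finset.tsum_subtype']
  have hA : ∑ ℓ ∈ Finset.range N, a ℓ ≤ (N : ℝ≥0∞) := by
    calc ∑ ℓ ∈ Finset.range N, a ℓ ≤ ∑ ℓ ∈ Finset.range N, 1 :=
          Finset.sum_le_sum fun i _ => ha i
      _ = (N : ℝ≥0∞) := by simp
  have hAne : ∑ ℓ ∈ Finset.range N, a ℓ ≠ ∞ :=
    (lt_of_le_of_lt hA (ENNReal.natCast_lt_top N)).ne
  have htail : ∑ ℓ ∈ Finset.range N, (1 - a ℓ) ≤ ∑' ℓ : ↥sᶜ, a ℓ := by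
    have h1 : ∑ ℓ ∈ Finset.range N, a ℓ + ∑ ℓ ∈ Finset.range N, (1 - a ℓ)
        = (N : ℝ≥0∞) := by
      rw [← Finset.sum_add_distrib]
      have h : ∀ ℓ, a ℓ + (1 - a ℓ) = 1 := fun ℓ => add_tsub_cancel_of_le (ha ℓ)
      simp [h]
    have h2 : ∑ ℓ ∈ Finset.range N, a ℓ + ∑ ℓ ∈ Finset.range N, (1 - a ℓ)
        ≤ ∑ ℓ ∈ Finset.range N, a ℓ + ∑' ℓ : ↥sᶜ, a ℓ := by
      rw [h1, ← hsplit a]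
      exact hsum
    exact (ENNReal.add_le_add_iff_left hAne).mp h2
  calc (N:ℝ≥0∞)^2 = ∑ ℓ ∈ Finset.range N, lam ℓ := (aux_sum_odd N).symm
    _ ≤ ∑ ℓ ∈ Finset.range N, (lam ℓ * a ℓ + lam N * (1 - a ℓ)) := by
        refine Finset.sum_le_sum fun i hi => ?_
        have hiN : lam i ≤ lam N := hmono (Finset.mem_range.mp hi).le
        calc lam i = lam i * (a i + (1 - a i)) := by
              rw [add_tsub_cancel_of_le (ha i), mul_one]
          _ = lam i * a i + lam i * (1 - a i) := by rw [mul_add]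
          _ ≤ lam i * a i + lam N * (1 - a i) := by gcongr
    _ = ∑ ℓ ∈ Finset.range N, lam ℓ * a ℓ
        + lam N * ∑ ℓ ∈ Finset.range N, (1 - a ℓ) := by
        rw [Finset.sum_add_distrib, Finset.mul_sum]
    _ ≤ ∑ ℓ ∈ Finset.range N, lam ℓ * a ℓ + lam N * ∑' ℓ : ↥sᶜ, a ℓ := by gcongr
    _ ≤ ∑ ℓ ∈ Finset.range N, lam ℓ * a ℓ + ∑' ℓ : ↥sᶜ, lam ℓ * a ℓ := by
        gcongr
        rw [← ENNReal.tsum_mul_left]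
        refine ENNReal.tsum_le_tsum fun ℓ => ?_
        have hle : lam N ≤ lam ↑ℓ := by
          refine hmono ?_
          have h := ℓ.2
          simp only [hs, Set.mem_compl_iff, Finset.coe_range, Set.mem_Iio,
            not_lt] at h
          exact h
        gcongr
    _ = ∑' ℓ : ℕ, lam ℓ * a ℓ := (hsplit _).symm

theorem stmt_10 {H : Type*} [NormedAddCommGroup H] [InnerProductSpace ℂ H]
    [CompleteSpace H] (e : HilbertBasis ℕ ℂ H) (f : ℕ → H) (hf : Orthonormal ℂ f)
    (n : ℕ) :
    ((n : ℝ≥0∞) + 1) ^ 2 ≤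
      ∑ k ∈ Finset.range (n + 1), ∑' ℓ : ℕ,
        ENNReal.ofReal ((2 * (ℓ : ℝ) + 1) * ‖(inner ℂ (f k) (e ℓ) : ℂ)‖ ^ 2) := by
  set b : ℕ → ℕ → ℝ≥0∞ :=
    fun k ℓ => ENNReal.ofReal (‖(inner ℂ (f k) (e ℓ) : ℂ)‖ ^ 2) with hb
  have hterm : ∀ (k ℓ : ℕ),
      ENNReal.ofReal ((2 * (ℓ : ℝ) + 1) * ‖(inner ℂ (f k) (e ℓ) : ℂ)‖ ^ 2)
      = (2*(ℓ:ℝ≥0∞)+1) * b k ℓ := by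
    intro k ℓ
    rw [ENNReal.ofReal_mul (by positivity)]
    congr 1
    rw [show (2 * (ℓ:ℝ) + 1) = ((2*ℓ+1 : ℕ) : ℝ) by push_cast; ring,
      ENNReal.ofReal_natCast]
    push_cast
    ring
  have hpar : ∀ k, HasSum (fun ℓ => ‖(inner ℂ (f k) (e ℓ) : ℂ)‖ ^ 2) (‖f k‖ ^ 2) := by
    intro k
    have h := e.hasSum_inner_mul_inner (f k) (f k)
    have heq : (fun ℓ => (inner ℂ (f k) (e ℓ) : ℂ) * inner ℂ (e ℓ) (f k))
        = fun ℓ => ((‖(inner ℂ (f k) (e ℓ) : ℂ)‖ ^ 2 : ℝ) : ℂ) := by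
      funext ℓ
      rw [← inner_conj_symm (e ℓ) (f k), RCLike.mul_conj]
      norm_cast
    rw [heq] at h
    have h2 : HasSum (fun ℓ => ((‖(inner ℂ (f k) (e ℓ) : ℂ)‖ ^ 2 : ℝ) : ℂ))
        ((‖f k‖ ^ 2 : ℝ) : ℂ) := by
      rw [inner_self_eq_norm_sq_to_K] at h
      rw [Complex.ofReal_pow]
      exact h
    exact Complex.hasSum_ofReal.mp h2
  have hbsum : ∀ k, ∑' ℓ, b k ℓ = 1 := by
    intro k
    rw [hb]
    simp only
    rw [← ENNReal.ofReal_tsum_of_nonneg (fun ℓ => by positivity) (hpar k).summable,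
      (hpar k).tsum_eq, hf.1 k]
    simp
  have hswap : ∀ F : ℕ → ℕ → ℝ≥0∞,
      ∑ k ∈ Finset.range (n+1), ∑' ℓ, F k ℓ
        = ∑' ℓ, ∑ k ∈ Finset.range (n+1), F k ℓ :=
    fun F => (Summable.tsum_finsetSum fun i _ => ENNReal.summable).symm
  simp only [hterm]
  rw [hswap]
  have hcast : ((n : ℝ≥0∞) + 1) = ((n+1 : ℕ) : ℝ≥0∞) := by push_cast; ring
  rw [hcast]
  have key := aux_key (fun ℓ => ∑ k ∈ Finset.range (n+1), b k ℓ) (n+1) ?_ ?_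
  · refine key.trans (le_of_eq ?_)
    refine tsum_congr fun ℓ => ?_
    rw [Finset.mul_sum]
  · intro ℓ
    rw [hb]
    simp only
    rw [← ENNReal.ofReal_sum_of_nonneg (fun k _ => by positivity)]
    calc ENNReal.ofReal (∑ k ∈ Finset.range (n+1), ‖(inner ℂ (f k) (e ℓ) : ℂ)‖ ^ 2)
        ≤ ENNReal.ofReal (‖e ℓ‖^2) :=
          ENNReal.ofReal_le_ofReal (hf.sum_inner_products_le (e ℓ))
      _ = 1 := by rw [e.orthonormal.1 ℓ]; simp
  · rw [← hswap]
    refine le_of_eq ?_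
    rw [Finset.sum_congr rfl fun k _ => hbsum k]
    simp
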